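/- In the standard-model bracket on d = l* ⊕ a ⊕ l, the super Jacobi identity applied to a triple (a, L_1, L_2) with a ∈ a and L_1, L_2 ∈ l decomposes into two conditions: the a-component yields ad(α(L_1,L_2)) = (d_CE^1 ξ + (1/2)[ξ∧ξ]_a)(L_1,L_2) and the l*-component yields (d_{ξ̂} γ)(L_1,L_2)(a) = β(a, α(L_1,L_2)) (up to sign conventions), where d_{ξ̂}γ(L_1,L_2)(a) = -(-1)^{|L_1||L_2|}γ(L_2)(ξ(L_1)(a)) + γ(L_1)(ξ(L_2)(a)). -/

import Mathlib

/-- The induced grading on the dual space: `(l*)_i` consists of the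
functionals vanishing on `l_{i+1}`. -/
def dualG {K L : Type} [Field K] [AddCommGroup L] [Module K L]
    (gL : ZMod 2 → Submodule K L) (i : ZMod 2) :
    Submodule K (Module.Dual K L) where
  carrier := {Z | ∀ y ∈ gL (i + 1), Z y = 0}
  add_mem' := by
    intro a b ha hb y hy
    simp [LinearMap.add_apply, ha y hy, hb y hy]
  zero_mem' := by intro y hy; simp
  smul_mem' := by
    intro c a ha y hy
    simp [LinearMap.smul_apply, ha y hy]


lemma beta_scalar (K : Type) [Field K] (i p m : ZMod 2) (t1 t2 : K) :
    -((-1:K) ^ (m.val * (p.val + i.val))) * (-((-1:K) ^ ((m + p).val * i.val)) * t1)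
      - (-1:K) ^ (i.val * m.val) * (-((-1:K) ^ (p.val * (m + i).val)) * t2)
    = -((-1:K) ^ (p.val * i.val)) *
        (-((-1:K) ^ (m.val * (i.val + p.val))) * t2 - (-1:K) ^ (p.val * m.val) * t1) := by
  obtain rfl | rfl : i = 0 ∨ i = 1 := by revert i; decide
  all_goals obtain rfl | rfl : p = 0 ∨ p = 1 := by revert p; decide
  all_goals obtain rfl | rfl : m = 0 ∨ m = 1 := by revert m; decide
  all_goals
    norm_num [show ((0:ZMod 2)).val = 0 from rfl, show ((1:ZMod 2)).val = 1 from rfl,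
      show ((2:ZMod 2)).val = 0 from by decide] <;> ring

lemma comp_lemma (K : Type) [Field K] {M : Type} [AddCommGroup M] [Module K M]
    (i j k : ZMod 2) (x1 x2 x3 : M) :
    ((-1:K) ^ (i.val * k.val)) • ((-((-1:K) ^ (i.val * j.val))) •
        ((-((-1:K) ^ ((j + i).val * k.val))) • x1))
      + ((-1:K) ^ (i.val * j.val)) • ((-((-1:K) ^ ((j + k).val * i.val))) • x2)
      + ((-1:K) ^ (j.val * k.val)) • ((-((-1:K) ^ ((k + i).val * j.val))) • x3)
    = -(((-1:K) ^ (i.val * k.val)) • x2 + ((-1:K) ^ (i.val * j.val)) • x3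
        - ((-1:K) ^ (j.val * (i.val + k.val))) • x1) := by
  obtain rfl | rfl : i = 0 ∨ i = 1 := by revert i; decide
  all_goals obtain rfl | rfl : j = 0 ∨ j = 1 := by revert j; decide
  all_goals obtain rfl | rfl : k = 0 ∨ k = 1 := by revert k; decide
  all_goals
    norm_num [show ((0:ZMod 2)).val = 0 from rfl, show ((1:ZMod 2)).val = 1 from rfl,
      show ((2:ZMod 2)).val = 0 from by decide] <;> module

/-- in the standard-model bracket on d = l* ⊕ a ⊕ l, the super
Jacobi identity for a triple (a, L₁, L₂) decomposes into an a-component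
(condition on ξ and α) and an l*-component (condition relating γ, ξ, β, α). -/
theorem jacobi_on_a_L1_L2_decomposes
    (K A L : Type) [Field K] [CharZero K]
    [AddCommGroup A] [Module K A] [AddCommGroup L] [Module K L]
    -- the quasi-Frobenius Lie superalgebra a
    (gA : ZMod 2 → Submodule K A)
    (hsupA : gA 0 ⊔ gA 1 = ⊤) (hinfA : gA 0 ⊓ gA 1 = ⊥)
    (brA : A →ₗ[K] A →ₗ[K] A)
    (hgrA : ∀ i j : ZMod 2, ∀ x ∈ gA i, ∀ y ∈ gA j, brA x y ∈ gA (i + j))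
    (hantiA : ∀ i j : ZMod 2, ∀ x ∈ gA i, ∀ y ∈ gA j,
      brA x y = (-((-1 : K) ^ (i.val * j.val))) • brA y x)
    (hjacA : ∀ i j k : ZMod 2, ∀ x ∈ gA i, ∀ y ∈ gA j, ∀ z ∈ gA k,
      ((-1 : K) ^ (i.val * k.val)) • brA (brA x y) z
        + ((-1 : K) ^ (i.val * j.val)) • brA (brA y z) x
        + ((-1 : K) ^ (j.val * k.val)) • brA (brA z x) y = 0)
    (ωa : A →ₗ[K] A →ₗ[K] K)
    (hnondegA : ∀ x : A, (∀ y : A, ωa x y = 0) → x = 0)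
    (hωantiA : ∀ i j : ZMod 2, ∀ x ∈ gA i, ∀ y ∈ gA j,
      ωa x y = (-((-1 : K) ^ (i.val * j.val))) * ωa y x)
    (hclosedA : ∀ i j k : ZMod 2, ∀ x ∈ gA i, ∀ y ∈ gA j, ∀ z ∈ gA k,
      ((-1 : K) ^ (i.val * k.val)) * ωa x (brA y z)
        + ((-1 : K) ^ (k.val * j.val)) * ωa z (brA x y)
        + ((-1 : K) ^ (j.val * i.val)) * ωa y (brA z x) = 0)
    -- the abelian Lie superalgebra l
    (gL : ZMod 2 → Submodule K L)
    (hsupL : gL 0 ⊔ gL 1 = ⊤) (hinfL : gL 0 ⊓ gL 1 = ⊥)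
    -- the structure maps of the extension
    (ξ : L →ₗ[K] A →ₗ[K] A)
    (γ : L →ₗ[K] A →ₗ[K] Module.Dual K L)
    (ε : L →ₗ[K] L →ₗ[K] Module.Dual K L)
    (α : L →ₗ[K] L →ₗ[K] A)
    (β : A →ₗ[K] A →ₗ[K] Module.Dual K L)
    (hξgr : ∀ i j : ZMod 2, ∀ Lv ∈ gL i, ∀ a ∈ gA j, ξ Lv a ∈ gA (i + j))
    (hαgr : ∀ i j : ZMod 2, ∀ L₁ ∈ gL i, ∀ L₂ ∈ gL j, α L₁ L₂ ∈ gA (i + j))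
    -- ξ takes values in superderivations of a
    (hder : ∀ i j k : ZMod 2, ∀ Lv ∈ gL i, ∀ a ∈ gA j, ∀ b ∈ gA k,
      ξ Lv (brA a b)
        = brA (ξ Lv a) b + ((-1 : K) ^ (i.val * j.val)) • brA a (ξ Lv b))
    -- defining equation for β
    (hβ : ∀ i j k : ZMod 2, ∀ a ∈ gA i, ∀ b ∈ gA j, ∀ Lv ∈ gL k,
      β a b Lv = -((-1 : K) ^ (k.val * (i.val + j.val))) * ωa (ξ Lv a) b
        - ((-1 : K) ^ (j.val * k.val)) * ωa a (ξ Lv b))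
    -- defining equation for α
    (hα : ∀ i j k : ZMod 2, ∀ a ∈ gA i, ∀ L₁ ∈ gL j, ∀ L₂ ∈ gL k,
      ωa a (α L₁ L₂) = ((-1 : K) ^ (k.val * (j.val + i.val))) * γ L₂ a L₁
        - ((-1 : K) ^ (i.val * j.val)) * γ L₁ a L₂)
    (brD : (Module.Dual K L × A × L) →ₗ[K] (Module.Dual K L × A × L)
      →ₗ[K] (Module.Dual K L × A × L))
    (hbrZ : ∀ Z : Module.Dual K L, ∀ y : Module.Dual K L × A × L,
      brD (Z, 0, 0) y = 0 ∧ brD y (Z, 0, 0) = 0)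
    (hbrAA : ∀ a b : A,
      brD ((0 : Module.Dual K L), a, (0 : L)) ((0 : Module.Dual K L), b, (0 : L))
        = (β a b, brA a b, 0))
    (hbrLA : ∀ Lv : L, ∀ a : A,
      brD ((0 : Module.Dual K L), (0 : A), Lv) ((0 : Module.Dual K L), a, (0 : L))
        = (γ Lv a, ξ Lv a, 0))
    (hbrAL : ∀ i j : ZMod 2, ∀ a ∈ gA i, ∀ Lv ∈ gL j,
      brD ((0 : Module.Dual K L), a, (0 : L)) ((0 : Module.Dual K L), (0 : A), Lv)
        = (-((-1 : K) ^ (i.val * j.val))) • ((γ Lv a, ξ Lv a, 0)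
            : Module.Dual K L × A × L))
    (hbrLL : ∀ L₁ L₂ : L,
      brD ((0 : Module.Dual K L), (0 : A), L₁) ((0 : Module.Dual K L), (0 : A), L₂)
        = (ε L₁ L₂, α L₁ L₂, 0))
    : ∀ i j k : ZMod 2, ∀ a ∈ gA i, ∀ L₁ ∈ gL j, ∀ L₂ ∈ gL k,
      (((-1 : K) ^ (i.val * k.val))
          • brD (brD ((0 : Module.Dual K L), a, (0 : L))
              ((0 : Module.Dual K L), (0 : A), L₁))
            ((0 : Module.Dual K L), (0 : A), L₂)
        + ((-1 : K) ^ (i.val * j.val))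
          • brD (brD ((0 : Module.Dual K L), (0 : A), L₁)
              ((0 : Module.Dual K L), (0 : A), L₂))
            ((0 : Module.Dual K L), a, (0 : L))
        + ((-1 : K) ^ (j.val * k.val))
          • brD (brD ((0 : Module.Dual K L), (0 : A), L₂)
              ((0 : Module.Dual K L), a, (0 : L)))
            ((0 : Module.Dual K L), (0 : A), L₁) = 0)
      ↔
      ((((-1 : K) ^ (i.val * k.val)) • brA a (α L₁ L₂)
          + ((-1 : K) ^ (i.val * j.val)) • ξ L₁ (ξ L₂ a)
          - ((-1 : K) ^ (j.val * (i.val + k.val))) • ξ L₂ (ξ L₁ a) = 0)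
        ∧ (((-1 : K) ^ (i.val * k.val)) • β a (α L₁ L₂)
          + ((-1 : K) ^ (i.val * j.val)) • γ L₁ (ξ L₂ a)
          - ((-1 : K) ^ (j.val * (i.val + k.val))) • γ L₂ (ξ L₁ a) = 0)) := by
  intro i j k a ha L₁ hL₁ L₂ hL₂
  have hα12 : α L₁ L₂ ∈ gA (j + k) := hαgr j k L₁ hL₁ L₂ hL₂
  -- super-antisymmetry of β on graded elements
  have hβanti : β (α L₁ L₂) a = (-((-1:K) ^ ((j+k).val * i.val))) • β a (α L₁ L₂) := by
    have key : ∀ m : ZMod 2, ∀ z ∈ gL m,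
        β (α L₁ L₂) a z = (-((-1:K) ^ ((j+k).val * i.val))) * β a (α L₁ L₂) z := by
      intro m z hz
      rw [hβ (j+k) i m (α L₁ L₂) hα12 a ha z hz,
          hβ i (j+k) m a ha (α L₁ L₂) hα12 z hz,
          hωantiA (m+(j+k)) i (ξ z (α L₁ L₂)) (hξgr m (j+k) z hz _ hα12) a ha,
          hωantiA (j+k) (m+i) (α L₁ L₂) hα12 (ξ z a) (hξgr m i z hz a ha)]
      exact beta_scalar K i (j+k) m _ _
    apply LinearMap.ext
    intro Lv
    have hmem : Lv ∈ gL 0 ⊔ gL 1 := by rw [hsupL]; exact Submodule.mem_top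
    obtain ⟨x, hx, y, hy, rfl⟩ := Submodule.mem_sup.mp hmem
    simp only [map_add, LinearMap.smul_apply, smul_eq_mul]
    rw [key 0 x hx, key 1 y hy]
  have hA : brA (α L₁ L₂) a = (-((-1:K) ^ ((j+k).val * i.val))) • brA a (α L₁ L₂) :=
    hantiA (j+k) i (α L₁ L₂) hα12 a ha
  -- the three double brackets
  have e1 : brD (brD ((0 : Module.Dual K L), a, (0 : L))
        ((0 : Module.Dual K L), (0 : A), L₁)) ((0 : Module.Dual K L), (0 : A), L₂)
      = (-((-1:K) ^ (i.val * j.val))) • ((-((-1:K) ^ ((j + i).val * k.val))) •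
          ((γ L₂ (ξ L₁ a), ξ L₂ (ξ L₁ a), 0) : Module.Dual K L × A × L)) := by
    rw [hbrAL i j a ha L₁ hL₁, map_smul, LinearMap.smul_apply]
    have hd : ((γ L₁ a, ξ L₁ a, (0:L)) : Module.Dual K L × A × L)
        = ((γ L₁ a, 0, 0) : Module.Dual K L × A × L) + ((0, ξ L₁ a, 0) : Module.Dual K L × A × L) := by
      simp
    rw [hd, map_add, LinearMap.add_apply, (hbrZ (γ L₁ a) _).1,
        hbrAL (j+i) k (ξ L₁ a) (hξgr j i L₁ hL₁ a ha) L₂ hL₂, zero_add]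
  have e2 : brD (brD ((0 : Module.Dual K L), (0 : A), L₁)
        ((0 : Module.Dual K L), (0 : A), L₂)) ((0 : Module.Dual K L), a, (0 : L))
      = ((β (α L₁ L₂) a, brA (α L₁ L₂) a, 0) : Module.Dual K L × A × L) := by
    rw [hbrLL]
    have hd : ((ε L₁ L₂, α L₁ L₂, (0:L)) : Module.Dual K L × A × L)
        = ((ε L₁ L₂, 0, 0) : Module.Dual K L × A × L) + ((0, α L₁ L₂, 0) : Module.Dual K L × A × L) := by
      simp
    rw [hd, map_add, LinearMap.add_apply, (hbrZ (ε L₁ L₂) _).1, hbrAA, zero_add]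
  have e3 : brD (brD ((0 : Module.Dual K L), (0 : A), L₂)
        ((0 : Module.Dual K L), a, (0 : L))) ((0 : Module.Dual K L), (0 : A), L₁)
      = (-((-1:K) ^ ((k + i).val * j.val))) •
          ((γ L₁ (ξ L₂ a), ξ L₁ (ξ L₂ a), 0) : Module.Dual K L × A × L) := by
    rw [hbrLA L₂ a]
    have hd : ((γ L₂ a, ξ L₂ a, (0:L)) : Module.Dual K L × A × L)
        = ((γ L₂ a, 0, 0) : Module.Dual K L × A × L) + ((0, ξ L₂ a, 0) : Module.Dual K L × A × L) := by
      simp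
    rw [hd, map_add, LinearMap.add_apply, (hbrZ (γ L₂ a) _).1,
        hbrAL (k+i) j (ξ L₂ a) (hξgr k i L₂ hL₂ a ha) L₁ hL₁, zero_add]
  have hsum : (((-1 : K) ^ (i.val * k.val))
          • brD (brD ((0 : Module.Dual K L), a, (0 : L))
              ((0 : Module.Dual K L), (0 : A), L₁))
            ((0 : Module.Dual K L), (0 : A), L₂)
        + ((-1 : K) ^ (i.val * j.val))
          • brD (brD ((0 : Module.Dual K L), (0 : A), L₁)
              ((0 : Module.Dual K L), (0 : A), L₂))
            ((0 : Module.Dual K L), a, (0 : L))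
        + ((-1 : K) ^ (j.val * k.val))
          • brD (brD ((0 : Module.Dual K L), (0 : A), L₂)
              ((0 : Module.Dual K L), a, (0 : L)))
            ((0 : Module.Dual K L), (0 : A), L₁))
      = ((-(((-1 : K) ^ (i.val * k.val)) • β a (α L₁ L₂)
          + ((-1 : K) ^ (i.val * j.val)) • γ L₁ (ξ L₂ a)
          - ((-1 : K) ^ (j.val * (i.val + k.val))) • γ L₂ (ξ L₁ a)),
         -(((-1 : K) ^ (i.val * k.val)) • brA a (α L₁ L₂)
          + ((-1 : K) ^ (i.val * j.val)) • ξ L₁ (ξ L₂ a)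
          - ((-1 : K) ^ (j.val * (i.val + k.val))) • ξ L₂ (ξ L₁ a)),
         (0 : L)) : Module.Dual K L × A × L) := by
    rw [e1, e2, e3, hβanti, hA, Prod.ext_iff, Prod.ext_iff]
    refine ⟨?_, ?_, ?_⟩
    · exact comp_lemma K i j k (γ L₂ (ξ L₁ a)) (β a (α L₁ L₂)) (γ L₁ (ξ L₂ a))
    · exact comp_lemma K i j k (ξ L₂ (ξ L₁ a)) (brA a (α L₁ L₂)) (ξ L₁ (ξ L₂ a))
    · simp
  rw [hsum, Prod.mk_eq_zero, Prod.mk_eq_zero, neg_eq_zero, neg_eq_zero]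
  constructor
  · rintro ⟨h1, h2, -⟩; exact ⟨h2, h1⟩
  · rintro ⟨h2, h1⟩; exact ⟨h1, h2, rfl⟩
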